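/- Let A : L²(M) → Y be compact with v_n ∈ L^∞(M) and Σ_n σ_n^η ‖v_n‖²_{L^∞} < ∞ for some η > 2. If c_n ≥ C σ_n^{1−η/2} for all n with some C > 0, then T^c_α : Y → L^∞(M) is bounded with ‖T^c_α‖_{Y→L^∞} ≤ (1/(αC)) · ‖(σ_n^{η/2}‖v_n‖_∞)_n‖_{ℓ²}. -/

import Mathlib

open MeasureTheory
open scoped RealInnerProductSpace ENNReal

/-- if `v_n ∈ L^∞(M)` and `Σ_n σ_n^η ‖v_n‖²_{L^∞} < ∞` for some
`η > 2`, then for any weights `c_n ≥ C σ_n^{1−η/2}` (`C > 0`) the operator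
`T^c_α : Y → L^∞(M)` is bounded with
`‖T^c_α y‖_{L^∞} ≤ (1/(α C)) ‖(σ_n^{η/2}‖v_n‖_∞)_n‖_{ℓ²} ‖y‖`. -/
theorem stmt17
    {M : Type*} [MeasureSpace M]
    {Y : Type*} [NormedAddCommGroup Y] [InnerProductSpace ℝ Y] [CompleteSpace Y]
    (u : ℕ → Y) (hu : Orthonormal ℝ u)
    (v : ℕ → M → ℝ)
    (hv2 : ∀ n, MemLp (v n) 2 volume) (hvinf : ∀ n, MemLp (v n) ⊤ volume)
    (hvON : ∀ n m, ∫ x, v n x * v m x = if n = m then (1 : ℝ) else 0)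
    (σ : ℕ → ℝ) (hσpos : ∀ n, 0 < σ n) (hσanti : Antitone σ)
    (hσ0 : Filter.Tendsto σ Filter.atTop (nhds 0))
    (η : ℝ) (hη : 0 < η) (hη2 : 2 < η)
    (hgrowth : Summable (fun n => σ n ^ η * (eLpNorm (v n) ⊤ volume).toReal ^ 2))
    (c : ℕ → ℝ) (C : ℝ) (hC : 0 < C) (hc : ∀ n, C * σ n ^ (1 - η / 2) ≤ c n)
    (α : ℝ) (hα : 0 < α) :
    ∀ y : Y,
      eLpNorm (fun x => ∑' n, (σ n / ((σ n) ^ 2 + α * c n)) * ⟪y, u n⟫ * v n x)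
          ⊤ volume ≤
        ENNReal.ofReal
          ((1 / (α * C)) *
            Real.sqrt (∑' n, σ n ^ η * (eLpNorm (v n) ⊤ volume).toReal ^ 2) *
            ‖y‖) := by
  intro y
  set N : ℕ → ℝ := fun n => (eLpNorm (v n) ⊤ volume).toReal with hN
  set b : ℕ → ℝ := fun n => ‖⟪u n, y⟫‖ with hb
  set f : ℕ → ℝ := fun n => σ n ^ (η / 2) * N n with hf
  set S : ℝ := ∑' n, σ n ^ η * N n ^ 2 with hS
  have hNnn : ∀ n, 0 ≤ N n := fun n => ENNReal.toReal_nonneg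
  have hbnn : ∀ n, 0 ≤ b n := fun n => norm_nonneg _
  have hfnn : ∀ n, 0 ≤ f n :=
    fun n => mul_nonneg (Real.rpow_nonneg (hσpos n).le _) (hNnn n)
  have hf2 : ∀ n, f n ^ 2 = σ n ^ η * N n ^ 2 := by
    intro n
    have h1 : (σ n ^ (η / 2)) ^ 2 = σ n ^ η := by
      rw [← Real.rpow_natCast (σ n ^ (η / 2)) 2, ← Real.rpow_mul (hσpos n).le]
      norm_num
    simp [hf, mul_pow, h1]
  have hsumf2 : Summable (fun n => f n ^ 2) := by
    simpa only [hf2] using hgrowth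
  have hsumb2 : Summable (fun n => b n ^ 2) := hu.inner_products_summable y
  have hbessel : ∑' n, b n ^ 2 ≤ ‖y‖ ^ 2 := hu.tsum_inner_products_le y
  have hsumfb : Summable (fun n => f n * b n) := by
    refine Summable.of_nonneg_of_le (fun n => mul_nonneg (hfnn n) (hbnn n))
      (fun n => ?_) (hsumf2.add hsumb2)
    nlinarith [sq_nonneg (f n - b n)]
  have hCS : ∑' n, f n * b n ≤ Real.sqrt S * ‖y‖ := by
    refine Summable.tsum_le_of_sum_le hsumfb (fun s => ?_)
    calc ∑ n ∈ s, f n * b n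
        ≤ Real.sqrt (∑ n ∈ s, f n ^ 2) * Real.sqrt (∑ n ∈ s, b n ^ 2) :=
          Real.sum_mul_le_sqrt_mul_sqrt s f b
      _ ≤ Real.sqrt S * ‖y‖ := by
          have h1 : ∑ n ∈ s, f n ^ 2 ≤ S := by
            rw [hS]
            simp only [← hf2]
            exact Summable.sum_le_tsum s (fun i _ => sq_nonneg _) hsumf2
          have h2 : ∑ n ∈ s, b n ^ 2 ≤ ‖y‖ ^ 2 :=
            le_trans (Summable.sum_le_tsum s (fun i _ => sq_nonneg _) hsumb2) hbessel
          have h2' : Real.sqrt (∑ n ∈ s, b n ^ 2) ≤ ‖y‖ := by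
            rw [show ‖y‖ = Real.sqrt (‖y‖ ^ 2) by
              rw [Real.sqrt_sq (norm_nonneg y)]]
            exact Real.sqrt_le_sqrt h2
          exact mul_le_mul (Real.sqrt_le_sqrt h1) h2' (Real.sqrt_nonneg _)
            (Real.sqrt_nonneg _)
  -- coefficient bound
  have hden : ∀ n, 0 < σ n ^ 2 + α * c n := by
    intro n
    have : 0 < c n :=
      lt_of_lt_of_le (mul_pos hC (Real.rpow_pos_of_pos (hσpos n) _)) (hc n)
    positivity
  have hkey : ∀ n, σ n / (σ n ^ 2 + α * c n) ≤ σ n ^ (η / 2) / (α * C) := by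
    intro n
    have hp : 0 < σ n ^ (1 - η / 2) := Real.rpow_pos_of_pos (hσpos n) _
    have h1 : α * C * σ n ^ (1 - η / 2) ≤ σ n ^ 2 + α * c n := by
      have := mul_le_mul_of_nonneg_left (hc n) hα.le
      nlinarith [sq_nonneg (σ n)]
    have h2 : σ n / (σ n ^ 2 + α * c n) ≤ σ n / (α * C * σ n ^ (1 - η / 2)) :=
      div_le_div_of_nonneg_left (hσpos n).le (by positivity) h1
    refine h2.trans_eq ?_
    have hmul : σ n ^ (η / 2) * σ n ^ (1 - η / 2) = σ n := by
      rw [← Real.rpow_add (hσpos n)]; norm_num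
    rw [div_eq_div_iff (by positivity) (by positivity)]
    linear_combination (-(α * C)) * hmul
  -- a.e. bound on v n
  have hvae : ∀ᵐ x ∂(volume : Measure M), ∀ n, ‖v n x‖ ≤ N n := by
    rw [ae_all_iff]
    intro n
    filter_upwards [ae_le_eLpNormEssSup (f := v n) (μ := (volume : Measure M))]
      with x hx
    have hfin : eLpNormEssSup (v n) volume ≠ ⊤ := by
      have h := (hvinf n).2
      rw [eLpNorm_exponent_top] at h
      exact h.ne
    have : ((‖v n x‖₊ : ℝ≥0∞)).toReal ≤ (eLpNormEssSup (v n) volume).toReal :=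
      ENNReal.toReal_mono hfin hx
    simpa [hN, eLpNorm_exponent_top] using this
  rw [eLpNorm_exponent_top]
  refine eLpNormEssSup_le_of_ae_bound ?_
  filter_upwards [hvae] with x hx
  have habs : ∀ n, ‖(σ n / ((σ n) ^ 2 + α * c n)) * ⟪y, u n⟫ * v n x‖ ≤
      (1 / (α * C)) * (f n * b n) := by
    intro n
    rw [norm_mul, norm_mul]
    have h1 : ‖σ n / (σ n ^ 2 + α * c n)‖ = σ n / (σ n ^ 2 + α * c n) :=
      Real.norm_of_nonneg (div_nonneg (hσpos n).le (hden n).le)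
    have h2 : ‖⟪y, u n⟫‖ = b n := by rw [hb, real_inner_comm]
    rw [h1, h2]
    calc σ n / (σ n ^ 2 + α * c n) * b n * ‖v n x‖
        ≤ (σ n ^ (η / 2) / (α * C)) * b n * N n := by
          apply mul_le_mul _ (hx n) (norm_nonneg _)
          · exact mul_nonneg (div_nonneg (Real.rpow_nonneg (hσpos n).le _) (by positivity)) (hbnn n)
          · exact mul_le_mul_of_nonneg_right (hkey n) (hbnn n)
      _ = (1 / (α * C)) * (f n * b n) := by rw [hf]; ring
  have hsumx : Summable (fun n => ‖(σ n / ((σ n) ^ 2 + α * c n)) * ⟪y, u n⟫ * v n x‖) :=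
    Summable.of_nonneg_of_le (fun n => norm_nonneg _) habs (hsumfb.mul_left _)
  calc ‖∑' n, (σ n / ((σ n) ^ 2 + α * c n)) * ⟪y, u n⟫ * v n x‖
      ≤ ∑' n, ‖(σ n / ((σ n) ^ 2 + α * c n)) * ⟪y, u n⟫ * v n x‖ :=
        norm_tsum_le_tsum_norm hsumx
    _ ≤ ∑' n, (1 / (α * C)) * (f n * b n) :=
        Summable.tsum_le_tsum habs hsumx (hsumfb.mul_left _)
    _ = (1 / (α * C)) * ∑' n, f n * b n := tsum_mul_left
    _ ≤ (1 / (α * C)) * (Real.sqrt S * ‖y‖) := by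
        apply mul_le_mul_of_nonneg_left hCS
        positivity
    _ = (1 / (α * C)) * Real.sqrt S * ‖y‖ := by ring
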